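/- An r×s matrix B over ℚ is totally non-singular if and only if the r×(r+s) block matrix (I_r | B), obtained by adjoining the r×r identity matrix on the left of B, is highly non-singular. -/

import Mathlib

/-- An `r × n` matrix over `ℚ` is *highly non-singular* if every `r × r` submatrix formed
by choosing `r` of its columns is non-singular.  (Here the columns may be indexed by an
arbitrary type, e.g. `Fin r ⊕ Fin s` for an `r × (r + s)` matrix.) -/
def HighlyNonSingular {r : ℕ} {n : Type*} (A : Matrix (Fin r) n ℚ) : Prop :=
  ∀ c : Fin r → n, Function.Injective c → (A.submatrix id c).det ≠ 0

/-- A matrix over `ℚ` is *totally non-singular* if every minor of every size (formed from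
any choice of distinct rows and distinct columns) is non-zero. -/
def TotallyNonSingular {r s : ℕ} (A : Matrix (Fin r) (Fin s) ℚ) : Prop :=
  ∀ (k : ℕ) (ri : Fin k → Fin r) (ci : Fin k → Fin s),
    Function.Injective ri → Function.Injective ci → (A.submatrix ri ci).det ≠ 0

open Function Matrix

lemma augmented_det_eq_minor {r s : ℕ} (B : Matrix (Fin r) (Fin s) ℚ)
    (c : Fin r → Fin r ⊕ Fin s) (hc : Injective c) :
    ∃ (k : ℕ) (ri : Fin k → Fin r) (ci : Fin k → Fin s),
      Injective ri ∧ Injective ci ∧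
      Set.range ri = {a | ∀ i, c i ≠ Sum.inl a} ∧
      Set.range ci = {b | ∃ i, c i = Sum.inr b} ∧
      ((B.submatrix ri ci).det ≠ 0 ↔
        ((Matrix.fromCols (1 : Matrix (Fin r) (Fin r) ℚ) B).submatrix id c).det ≠ 0) := by
  classical
  set M := (Matrix.fromCols (1 : Matrix (Fin r) (Fin r) ℚ) B).submatrix id c with hM
  set P : Fin r → Prop := fun i => (c i).isLeft with hP
  -- the left and right column index subtypes
  set L := {i : Fin r // P i}
  set R := {i : Fin r // ¬ P i}
  -- the rows hit by identity columns
  let g : L → Fin r := fun i => (c i.1).getLeft i.2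
  have hcg : ∀ i : L, c i.1 = Sum.inl (g i) := fun i =>
    Sum.eq_left_iff_getLeft_eq.2 ⟨i.2, rfl⟩
  have hg : Injective g := by
    intro i j hij
    have : c i.1 = c j.1 := by rw [hcg i, hcg j, hij]
    exact Subtype.ext (hc this)
  -- right columns give columns of B
  have hcr : ∀ i : R, ∃ b, c i.1 = Sum.inr b := fun i => by
    rcases h : c i.1 with a | b
    · exact absurd (by simp [hP, h] : P i.1) i.2
    · exact ⟨b, rfl⟩
  let cR : R → Fin s := fun i => (hcr i).choose
  have hcR : ∀ i : R, c i.1 = Sum.inr (cR i) := fun i => (hcr i).choose_spec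
  have hcRinj : Injective cR := by
    intro i j hij
    have : c i.1 = c j.1 := by rw [hcR i, hcR j, hij]
    exact Subtype.ext (hc this)
  -- cardinality bookkeeping
  have hcard : Fintype.card R = Fintype.card ↥(Set.range g)ᶜ := by
    have h1 : Fintype.card ↥(Set.range g) = Fintype.card L :=
      (Fintype.card_congr (Equiv.ofInjective g hg)).symm
    have h2 : Fintype.card ↥(Set.range g)ᶜ = r - Fintype.card L := by
      rw [Fintype.card_compl_set, h1, Fintype.card_fin]
    rw [h2, Fintype.card_subtype_compl, Fintype.card_fin]
  -- the row equiv
  let e2 : R ≃ ↥(Set.range g)ᶜ := Fintype.equivOfCardEq hcard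
  let rowE : L ⊕ R ≃ Fin r :=
    (Equiv.sumCongr (Equiv.ofInjective g hg) e2).trans (Equiv.Set.sumCompl (Set.range g))
  let colE : L ⊕ R ≃ Fin r := Equiv.sumCompl P
  have hrowL : ∀ i : L, rowE (Sum.inl i) = g i := fun i => by
    simp [rowE, Equiv.Set.sumCompl]
    rfl
  have hrowR : ∀ i : R, rowE (Sum.inr i) = (e2 i : Fin r) := fun i => by
    simp [rowE, Equiv.Set.sumCompl]
    rfl
  -- the reindexed matrix
  have hcolL : ∀ j : L, colE (Sum.inl j) = j.1 := fun j => Equiv.sumCompl_apply_inl (p := P) j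
  have hcolR : ∀ j : R, colE (Sum.inr j) = j.1 := fun j => Equiv.sumCompl_apply_inr (p := P) j
  set M' := M.submatrix rowE colE with hM'
  have h21 : M'.toBlocks₂₁ = 0 := by
    ext i j
    have hne : rowE (Sum.inr i) ≠ g j := by
      rw [hrowR i]
      have := (e2 i).2
      intro h
      exact this (h ▸ Set.mem_range_self j)
    show M (rowE (Sum.inr i)) (colE (Sum.inl j)) = 0
    rw [hcolL j, hM, Matrix.submatrix_apply, id_eq, hcg j, Matrix.fromCols_apply_inl,
      Matrix.one_apply, if_neg hne]
  have h11 : M'.toBlocks₁₁ = 1 := by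
    ext i j
    show M (rowE (Sum.inl i)) (colE (Sum.inl j)) = (1 : Matrix L L ℚ) i j
    rw [hcolL j, hM, Matrix.submatrix_apply, id_eq, hcg j, Matrix.fromCols_apply_inl,
      hrowL i, Matrix.one_apply, Matrix.one_apply]
    simp [hg.eq_iff]
  -- the minor
  let ri0 : R → Fin r := fun i => rowE (Sum.inr i)
  have hri0 : Injective ri0 := fun i j h => Sum.inr_injective (rowE.injective h)
  have h22 : M'.toBlocks₂₂ = B.submatrix ri0 cR := by
    ext i j
    show M (rowE (Sum.inr i)) (colE (Sum.inr j)) = B (ri0 i) (cR j)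
    rw [hcolR j, hM, Matrix.submatrix_apply, id_eq, hcR j, Matrix.fromCols_apply_inr]
  -- determinant relation
  have hdet : M'.det = (B.submatrix ri0 cR).det := by
    rw [← Matrix.fromBlocks_toBlocks M', h21, h11, h22, Matrix.det_fromBlocks_zero₂₁,
      Matrix.det_one, one_mul]
  have hdet2 : M'.det = (Equiv.Perm.sign (colE.trans rowE.symm) : ℚ) * M.det := by
    have : M' = (M.submatrix rowE rowE).submatrix id (colE.trans rowE.symm) := by
      rw [Matrix.submatrix_submatrix]
      ext i j
      simp [M', Matrix.submatrix_apply]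
    rw [this, Matrix.det_permute' (colE.trans rowE.symm), Matrix.det_submatrix_equiv_self]
  have hiff : (B.submatrix ri0 cR).det ≠ 0 ↔ M.det ≠ 0 := by
    rw [← hdet, hdet2]
    simp
  -- ranges
  have hrange_ri0 : Set.range ri0 = {a | ∀ i, c i ≠ Sum.inl a} := by
    ext a
    simp only [Set.mem_range, Set.mem_setOf_eq]
    constructor
    · rintro ⟨i, rfl⟩ j hj
      have haL : P j := by simp [hP, hj]
      have : ri0 i ∈ (Set.range g)ᶜ := by
        show rowE (Sum.inr i) ∈ (Set.range g)ᶜ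
        rw [hrowR i]; exact (e2 i).2
      refine this ⟨⟨j, haL⟩, ?_⟩
      have := hcg ⟨j, haL⟩
      rw [hj] at this
      exact (Sum.inl_injective this.symm)
    · intro ha
      have haR : a ∈ (Set.range g)ᶜ := by
        rintro ⟨i, rfl⟩
        exact ha i.1 (hcg i)
      refine ⟨e2.symm ⟨a, haR⟩, ?_⟩
      show rowE (Sum.inr (e2.symm ⟨a, haR⟩)) = a
      rw [hrowR, Equiv.apply_symm_apply]
  have hrange_cR : Set.range cR = {b | ∃ i, c i = Sum.inr b} := by
    ext b
    simp only [Set.mem_range, Set.mem_setOf_eq]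
    constructor
    · rintro ⟨i, rfl⟩
      exact ⟨i.1, hcR i⟩
    · rintro ⟨i, hi⟩
      have hiR : ¬ P i := by simp [hP, hi]
      refine ⟨⟨i, hiR⟩, ?_⟩
      have := hcR ⟨i, hiR⟩
      rw [hi] at this
      exact (Sum.inr_injective this).symm
  -- convert to Fin
  let eR := (Fintype.equivFin R).symm
  refine ⟨Fintype.card R, ri0 ∘ eR, cR ∘ eR, hri0.comp eR.injective, hcRinj.comp eR.injective,
    ?_, ?_, ?_⟩
  · rw [Set.range_comp, Equiv.range_eq_univ, Set.image_univ, hrange_ri0]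
  · rw [Set.range_comp, Equiv.range_eq_univ, Set.image_univ, hrange_cR]
  · rw [← hiff]
    have : B.submatrix (ri0 ∘ eR) (cR ∘ eR) = (B.submatrix ri0 cR).submatrix eR eR := rfl
    rw [this, Matrix.det_submatrix_equiv_self]

lemma minor_transfer {r s k k' : ℕ} (B : Matrix (Fin r) (Fin s) ℚ)
    (ri : Fin k → Fin r) (ci : Fin k → Fin s)
    (ri' : Fin k' → Fin r) (ci' : Fin k' → Fin s)
    (hri : Injective ri) (hci : Injective ci)
    (hri' : Injective ri') (hci' : Injective ci')
    (h1 : Set.range ri = Set.range ri') (h2 : Set.range ci = Set.range ci') :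
    (B.submatrix ri ci).det ≠ 0 ↔ (B.submatrix ri' ci').det ≠ 0 := by
  let σ : Fin k ≃ Fin k' :=
    (Equiv.ofInjective ri hri).trans ((Equiv.setCongr h1).trans (Equiv.ofInjective ri' hri').symm)
  let τ : Fin k ≃ Fin k' :=
    (Equiv.ofInjective ci hci).trans ((Equiv.setCongr h2).trans (Equiv.ofInjective ci' hci').symm)
  have hσ : ∀ i, ri' (σ i) = ri i := fun i => by
    simpa [σ] using Equiv.apply_ofInjective_symm hri' ⟨ri i, h1 ▸ Set.mem_range_self i⟩
  have hτ : ∀ i, ci' (τ i) = ci i := fun i => by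
    simpa [τ] using Equiv.apply_ofInjective_symm hci' ⟨ci i, h2 ▸ Set.mem_range_self i⟩
  have key : B.submatrix ri ci =
      ((B.submatrix ri' ci').submatrix σ σ).submatrix id (τ.trans σ.symm) := by
    rw [Matrix.submatrix_submatrix]
    ext i j
    simp [hσ, hτ, Matrix.submatrix_apply, hτ j]
  rw [key, Matrix.det_permute' (τ.trans σ.symm), Matrix.det_submatrix_equiv_self]
  simp

/-- Lemma 2.1 (ii): an `r × s` matrix `B` over `ℚ` is totally non-singular if and only if
the `r × (r + s)` block matrix `(I_r | B)` is highly non-singular. -/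
theorem totallyNonSingular_iff_augmented_highlyNonSingular (r s : ℕ)
    (B : Matrix (Fin r) (Fin s) ℚ) :
    TotallyNonSingular B ↔
      HighlyNonSingular (Matrix.fromCols (1 : Matrix (Fin r) (Fin r) ℚ) B) := by
  constructor
  · intro hB c hc
    obtain ⟨k, ri, ci, hri, hci, -, -, hiff⟩ := augmented_det_eq_minor B c hc
    exact hiff.1 (hB k ri ci hri hci)
  · intro hA k ri ci hri hci
    classical
    let c : Fin r → Fin r ⊕ Fin s :=
      fun i => if h : ∃ j, ri j = i then Sum.inr (ci h.choose) else Sum.inl i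
    have hc1 : ∀ j : Fin k, c (ri j) = Sum.inr (ci j) := by
      intro j
      have h : ∃ j', ri j' = ri j := ⟨j, rfl⟩
      show (if h : ∃ j', ri j' = ri j then Sum.inr (ci h.choose) else Sum.inl (ri j)) = _
      rw [dif_pos h]
      exact congrArg _ (congrArg ci (hri h.choose_spec))
    have hc2 : ∀ i, (¬∃ j, ri j = i) → c i = Sum.inl i := fun i h => dif_neg h
    have hcinj : Function.Injective c := by
      intro a b hab
      by_cases ha : ∃ j, ri j = a <;> by_cases hb : ∃ j, ri j = b
      · obtain ⟨ja, rfl⟩ := ha; obtain ⟨jb, rfl⟩ := hb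
        rw [hc1, hc1] at hab
        exact congrArg ri (hci (Sum.inr_injective hab))
      · obtain ⟨ja, rfl⟩ := ha
        rw [hc1 ja, hc2 b hb] at hab; exact absurd hab Sum.inr_ne_inl
      · obtain ⟨jb, rfl⟩ := hb
        rw [hc2 a ha, hc1 jb] at hab; exact absurd hab Sum.inl_ne_inr
      · rw [hc2 a ha, hc2 b hb] at hab; exact Sum.inl_injective hab
    obtain ⟨k', ri', ci', hri', hci', hr1, hr2, hiff⟩ := augmented_det_eq_minor B c hcinj
    have h1 : Set.range ri = Set.range ri' := by
      rw [hr1]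
      ext a
      simp only [Set.mem_range, Set.mem_setOf_eq]
      constructor
      · rintro ⟨j, rfl⟩ i hi
        by_cases hir : ∃ j', ri j' = i
        · obtain ⟨j', rfl⟩ := hir
          rw [hc1 j'] at hi; exact Sum.inr_ne_inl hi
        · rw [hc2 i hir] at hi
          exact hir (Sum.inl_injective hi ▸ ⟨j, rfl⟩)
      · intro ha
        by_contra hna
        exact ha a (hc2 a hna)
    have h2 : Set.range ci = Set.range ci' := by
      rw [hr2]
      ext b
      simp only [Set.mem_range, Set.mem_setOf_eq]
      constructor
      · rintro ⟨j, rfl⟩; exact ⟨ri j, hc1 j⟩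
      · rintro ⟨i, hi⟩
        by_cases hir : ∃ j, ri j = i
        · obtain ⟨j, rfl⟩ := hir
          rw [hc1 j] at hi
          exact ⟨j, Sum.inr_injective hi⟩
        · rw [hc2 i hir] at hi; exact absurd hi Sum.inl_ne_inr
    exact (minor_transfer B ri ci ri' ci' hri hci hri' hci' h1 h2).2 (hiff.2 (hA c hcinj))
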